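/- For every p with 1 < p < ∞ and every integer n ≥ 4, there exists an n-point metric space M such that no 4-point subspace of M embeds isometrically into ℓ_p. (Consequently R_p(n) = 3 for n ≥ 3 and 1 < p < ∞.) -/

import Mathlib

set_option maxHeartbeats 1000000

open scoped ENNReal

/-- `d` is a metric (distance function) on `α`. -/
def IsMetricDist {α : Type*} (d : α → α → ℝ) : Prop :=
  (∀ x y, d x y = 0 ↔ x = y) ∧ (∀ x y, d x y = d y x) ∧
    (∀ x y z, d x z ≤ d x y + d y z)

namespace Stmt19Aux

open Real

lemma radd {q : ℝ} (hq : 1 ≤ q) {x y : ℝ} (hx : 0 ≤ x) (hy : 0 ≤ y) :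
    x ^ q + y ^ q ≤ (x + y) ^ q := by
  have h := NNReal.add_rpow_le_rpow_add x.toNNReal y.toNNReal hq
  rw [← Real.toNNReal_add hx hy] at h
  have h' := (NNReal.coe_le_coe).2 h
  rwa [NNReal.coe_add, NNReal.coe_rpow, NNReal.coe_rpow, NNReal.coe_rpow,
    Real.coe_toNNReal _ hx, Real.coe_toNNReal _ hy,
    Real.coe_toNNReal _ (by linarith : (0:ℝ) ≤ x + y)] at h'

lemma rmean {q : ℝ} (hq : 1 ≤ q) {x y : ℝ} (hx : 0 ≤ x) (hy : 0 ≤ y) :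
    (x + y) ^ q ≤ 2 ^ (q - 1) * (x ^ q + y ^ q) := by
  have key : ((x + y)/2) ^ q ≤ (x ^ q + y ^ q)/2 := by
    have h := NNReal.rpow_arith_mean_le_arith_mean2_rpow (1/2) (1/2) x.toNNReal y.toNNReal
      (by rw [← NNReal.coe_inj]; push_cast; norm_num) hq
    have h' := (NNReal.coe_le_coe).2 h
    push_cast [Real.coe_toNNReal _ hx, Real.coe_toNNReal _ hy] at h'
    calc ((x + y)/2) ^ q = (1/2 * x + 1/2 * y) ^ q := by ring_nf
    _ ≤ 1/2 * x ^ q + 1/2 * y ^ q := by convert h' using 3 <;> norm_num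
    _ = (x ^ q + y ^ q)/2 := by ring
  have h2 : (x + y) ^ q = 2 ^ q * ((x + y)/2) ^ q := by
    rw [← Real.mul_rpow (by norm_num) (by positivity)]
    congr 1; ring
  rw [h2]
  calc 2 ^ q * ((x + y)/2) ^ q ≤ 2 ^ q * ((x ^ q + y ^ q)/2) := by
        have h2q : (0:ℝ) < 2 ^ q := Real.rpow_pos_of_pos (by norm_num) q
        nlinarith [key]
  _ = 2 ^ (q - 1) * (x ^ q + y ^ q) := by
        rw [Real.rpow_sub (by norm_num : (0:ℝ) < 2), Real.rpow_one]; ring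

lemma clarkson_point {r : ℝ} (hr : 2 ≤ r) (a b : ℝ) :
    |a + b| ^ r + |a - b| ^ r ≤ 2 ^ (r - 1) * (|a| ^ r + |b| ^ r) := by
  have hr1 : (1:ℝ) ≤ r/2 := by linarith
  have habs : ∀ t : ℝ, |t| ^ r = (t ^ 2) ^ (r/2) := by
    intro t
    rw [← sq_abs, ← Real.rpow_natCast |t| 2, ← Real.rpow_mul (abs_nonneg t)]
    congr 1; push_cast; ring
  rw [habs (a+b), habs (a-b), habs a, habs b]
  have step1 : ((a+b) ^ 2) ^ (r/2) + ((a-b) ^ 2) ^ (r/2)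
      ≤ ((a+b) ^ 2 + (a-b) ^ 2) ^ (r/2) := radd hr1 (sq_nonneg _) (sq_nonneg _)
  have e1 : (a+b) ^ 2 + (a-b) ^ 2 = a ^ 2 + b ^ 2 + (a ^ 2 + b ^ 2) := by ring
  have step2 : (a ^ 2 + b ^ 2 + (a ^ 2 + b ^ 2)) ^ (r/2)
      ≤ 2 ^ (r/2 - 1) * ((a ^ 2 + b ^ 2) ^ (r/2) + (a ^ 2 + b ^ 2) ^ (r/2)) :=
    rmean hr1 (by positivity) (by positivity)
  have step3 : (a ^ 2 + b ^ 2) ^ (r/2) ≤ 2 ^ (r/2 - 1) * ((a ^ 2) ^ (r/2) + (b ^ 2) ^ (r/2)) :=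
    rmean hr1 (sq_nonneg a) (sq_nonneg b)
  have hc : (0:ℝ) < 2 ^ (r/2 - 1) := Real.rpow_pos_of_pos (by norm_num) _
  have hcc : (2:ℝ) ^ (r/2 - 1) * ((2:ℝ) * (2:ℝ) ^ (r/2 - 1)) = (2:ℝ) ^ (r - 1) := by
    calc (2:ℝ) ^ (r/2 - 1) * ((2:ℝ) * (2:ℝ) ^ (r/2 - 1))
        = (2:ℝ) ^ (1:ℝ) * ((2:ℝ) ^ (r/2-1) * (2:ℝ) ^ (r/2-1)) := by rw [Real.rpow_one]; ring
    _ = (2:ℝ) ^ ((1:ℝ) + ((r/2-1) + (r/2-1))) := by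
          rw [Real.rpow_add (by norm_num : (0:ℝ) < 2),
            Real.rpow_add (by norm_num : (0:ℝ) < 2)]
    _ = (2:ℝ) ^ (r - 1) := by congr 1; ring
  calc ((a+b) ^ 2) ^ (r/2) + ((a-b) ^ 2) ^ (r/2)
      ≤ ((a+b) ^ 2 + (a-b) ^ 2) ^ (r/2) := step1
  _ = (a ^ 2 + b ^ 2 + (a ^ 2 + b ^ 2)) ^ (r/2) := by rw [e1]
  _ ≤ 2 ^ (r/2 - 1) * ((a ^ 2 + b ^ 2) ^ (r/2) + (a ^ 2 + b ^ 2) ^ (r/2)) := step2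
  _ = 2 ^ (r/2 - 1) * (2:ℝ) * (a ^ 2 + b ^ 2) ^ (r/2) := by ring
  _ ≤ 2 ^ (r/2 - 1) * (2:ℝ) * (2 ^ (r/2 - 1) * ((a ^ 2) ^ (r/2) + (b ^ 2) ^ (r/2))) := by
        nlinarith [step3, hc]
  _ = (2:ℝ) ^ (r - 1) * ((a ^ 2) ^ (r/2) + (b ^ 2) ^ (r/2)) := by rw [← hcc]; ring

end Stmt19Aux
section Part2
open Real
namespace Stmt19Aux

lemma fact_one_le {r : ℝ} (hr : 1 ≤ r) : Fact (1 ≤ ENNReal.ofReal r) :=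
  ⟨by rw [← ENNReal.ofReal_one]; exact ENNReal.ofReal_le_ofReal hr⟩

lemma clarkson_lp {r : ℝ} (hr : 2 ≤ r) (x y : lp (fun _ : ℕ => ℝ) (ENNReal.ofReal r)) :
    ‖x + y‖ ^ r + ‖x - y‖ ^ r ≤ 2 ^ (r - 1) * (‖x‖ ^ r + ‖y‖ ^ r) := by
  have hr0 : (0:ℝ) < r := by linarith
  have htr : (ENNReal.ofReal r).toReal = r := ENNReal.toReal_ofReal hr0.le
  have hpos : 0 < (ENNReal.ofReal r).toReal := by rw [htr]; exact hr0
  haveI : Fact (1 ≤ ENNReal.ofReal r) := fact_one_le (by linarith)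
  have summ : ∀ z : lp (fun _ : ℕ => ℝ) (ENNReal.ofReal r),
      Summable (fun i => ‖z i‖ ^ r) := by
    intro z
    have := (lp.memℓp z).summable hpos
    rwa [htr] at this
  have nrm : ∀ z : lp (fun _ : ℕ => ℝ) (ENNReal.ofReal r),
      ‖z‖ ^ r = ∑' i, ‖z i‖ ^ r := by
    intro z
    have := lp.norm_rpow_eq_tsum hpos z
    rwa [htr] at this
  have hpt : ∀ i, ‖(x+y) i‖ ^ r + ‖(x-y) i‖ ^ r ≤ 2^(r-1) * (‖x i‖^r + ‖y i‖^r) := by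
    intro i
    have e1 : (x + y) i = x i + y i := by rw [lp.coeFn_add]; rfl
    have e2 : (x - y) i = x i - y i := by rw [lp.coeFn_sub]; rfl
    rw [e1, e2, Real.norm_eq_abs, Real.norm_eq_abs, Real.norm_eq_abs, Real.norm_eq_abs]
    exact clarkson_point hr _ _
  calc ‖x + y‖ ^ r + ‖x - y‖ ^ r
      = (∑' i, ‖(x+y) i‖ ^ r) + ∑' i, ‖(x-y) i‖ ^ r := by rw [nrm, nrm]
  _ = ∑' i, (‖(x+y) i‖ ^ r + ‖(x-y) i‖ ^ r) := ((summ _).tsum_add (summ _)).symm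
  _ ≤ ∑' i, 2^(r-1) * (‖x i‖^r + ‖y i‖^r) :=
        Summable.tsum_le_tsum hpt ((summ _).add (summ _)) (((summ x).add (summ y)).mul_left _)
  _ = 2^(r-1) * ∑' i, (‖x i‖^r + ‖y i‖^r) := tsum_mul_left
  _ = 2^(r-1) * ((∑' i, ‖x i‖^r) + ∑' i, ‖y i‖^r) := by rw [Summable.tsum_add (summ x) (summ y)]
  _ = 2 ^ (r - 1) * (‖x‖ ^ r + ‖y‖ ^ r) := by rw [nrm, nrm]

lemma small_sum {r ε : ℝ} (hr : 2 ≤ r) (hε : 0 ≤ ε) (hεr : r * ε < (1/3 : ℝ) ^ r)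
    (x y : lp (fun _ : ℕ => ℝ) (ENNReal.ofReal r)) (hx : ‖x‖ ≤ 1) (hy : ‖y‖ ≤ 1)
    (hxy : 2 - 2*ε ≤ ‖x - y‖) : ‖x + y‖ < 2/3 := by
  haveI : Fact (1 ≤ ENNReal.ofReal r) := fact_one_le (by linarith)
  have hr0 : (0:ℝ) < r := by linarith
  have hthird : ((1:ℝ)/3) ^ r ≤ 1 := Real.rpow_le_one (by norm_num) (by norm_num) hr0.le
  have hε1 : ε ≤ 1/2 := by nlinarith
  have hC := clarkson_lp hr x y
  have hxr : ‖x‖ ^ r ≤ 1 := Real.rpow_le_one (norm_nonneg _) hx hr0.le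
  have hyr : ‖y‖ ^ r ≤ 1 := Real.rpow_le_one (norm_nonneg _) hy hr0.le
  have h2pos : (0:ℝ) < 2 ^ r := Real.rpow_pos_of_pos two_pos r
  have h2pos' : (0:ℝ) < 2 ^ (r-1) := Real.rpow_pos_of_pos two_pos (r-1)
  have hber : (1:ℝ) - r*ε ≤ (1 - ε) ^ r := by
    have h := one_add_mul_self_le_rpow_one_add (by linarith : (-1:ℝ) ≤ -ε)
      (by linarith : (1:ℝ) ≤ r)
    have e : (1:ℝ) + -ε = 1 - ε := by ring
    rw [e] at h
    linarith [h]
  have hlow : 2 ^ r * (1 - r*ε) ≤ ‖x - y‖ ^ r := by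
    have hmono : (2 - 2*ε) ^ r ≤ ‖x - y‖ ^ r :=
      Real.rpow_le_rpow (by linarith) hxy hr0.le
    have heq : (2 - 2*ε : ℝ) ^ r = 2 ^ r * (1 - ε) ^ r := by
      rw [show (2 - 2*ε : ℝ) = 2 * (1 - ε) by ring,
        Real.mul_rpow (by norm_num) (by linarith)]
    nlinarith [h2pos]
  have h2r1 : (2:ℝ) ^ (r-1) * 2 = 2 ^ r := by
    rw [Real.rpow_sub two_pos, Real.rpow_one]; ring
  have h23 : (2:ℝ) ^ r * ((1:ℝ)/3) ^ r = (2/3) ^ r := by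
    rw [← Real.mul_rpow (by norm_num) (by norm_num)]; norm_num
  have hfin : ‖x + y‖ ^ r < (2/3 : ℝ) ^ r := by
    have h1 : ‖x + y‖ ^ r ≤ 2 ^ (r-1) * (‖x‖^r + ‖y‖^r) - ‖x - y‖^r := by
      have := Real.rpow_nonneg (norm_nonneg (x - y)) r
      linarith
    have h2 : 2 ^ (r-1) * (‖x‖^r + ‖y‖^r) ≤ 2 ^ r := by nlinarith
    have h3 : ‖x + y‖ ^ r ≤ 2 ^ r * (r * ε) := by nlinarith
    have h4 : 2 ^ r * (r * ε) < 2 ^ r * ((1/3:ℝ)^r) := by nlinarith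
    linarith
  by_contra hcon
  push_neg at hcon
  have : (2/3:ℝ) ^ r ≤ ‖x + y‖ ^ r := Real.rpow_le_rpow (by norm_num) hcon hr0.le
  linarith

lemma hat_sep {V : Type*} [NormedAddCommGroup V] [NormedSpace ℝ V] (x y : V)
    (hy0 : y ≠ 0) (hyx : ‖y‖ ≤ ‖x‖) :
    ‖x - y‖ - (‖x‖ - ‖y‖) ≤ ‖y‖ * ‖(‖x‖⁻¹ • x) - (‖y‖⁻¹ • y)‖ := by
  rw [sub_le_iff_le_add]
  have hy : (0:ℝ) < ‖y‖ := norm_pos_iff.2 hy0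
  have hx : (0:ℝ) < ‖x‖ := lt_of_lt_of_le hy hyx
  have hx0 : x ≠ 0 := norm_pos_iff.1 hx
  have hx' : ‖x‖ ≠ 0 := ne_of_gt hx
  have hy' : ‖y‖ ≠ 0 := ne_of_gt hy
  have hid : x - y = (‖x‖ - ‖y‖) • (‖x‖⁻¹ • x) + ‖y‖ • ((‖x‖⁻¹ • x) - (‖y‖⁻¹ • y)) := by
    match_scalars
    · field_simp; ring
    · field_simp
  calc ‖x - y‖
      = ‖(‖x‖ - ‖y‖) • (‖x‖⁻¹ • x) + ‖y‖ • ((‖x‖⁻¹ • x) - (‖y‖⁻¹ • y))‖ := by rw [← hid]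
  _ ≤ ‖(‖x‖ - ‖y‖) • (‖x‖⁻¹ • x)‖ + ‖‖y‖ • ((‖x‖⁻¹ • x) - (‖y‖⁻¹ • y))‖ := norm_add_le _ _
  _ = (‖x‖ - ‖y‖) + ‖y‖ * ‖(‖x‖⁻¹ • x) - (‖y‖⁻¹ • y)‖ := by
      rw [norm_smul, norm_smul, norm_smul]
      rw [Real.norm_eq_abs, Real.norm_eq_abs, Real.norm_eq_abs,
        abs_of_nonneg (by linarith : (0:ℝ) ≤ ‖x‖ - ‖y‖), abs_of_pos hy,
        abs_of_pos (inv_pos.2 hx), inv_mul_cancel₀ hx', mul_one]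
  _ = ‖y‖ * ‖(‖x‖⁻¹ • x) - (‖y‖⁻¹ • y)‖ + (‖x‖ - ‖y‖) := by ring

end Stmt19Aux
end Part2
namespace Stmt19Aux
open Real

lemma pair_half {V : Type*} [NormedAddCommGroup V] [NormedSpace ℝ V] (x y : V)
    {a b ρ ε : ℝ} (hy0 : y ≠ 0) (hx : ‖x‖ = a + ρ) (hy : ‖y‖ = b + ρ)
    (hxy : ‖x - y‖ = a + b) (hb : 0 < b) (hρ : 0 < ρ) (hρb : ρ ≤ ε * b)
    (hba : b ≤ a) (hε : 0 < ε) :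
    2 - 2*ε ≤ ‖(‖x‖⁻¹ • x) - (‖y‖⁻¹ • y)‖ := by
  have hs := hat_sep x y hy0 (by rw [hx, hy]; linarith)
  set X := ‖(‖x‖⁻¹ • x) - (‖y‖⁻¹ • y)‖ with hX
  rw [hx, hy, hxy] at hs
  have hX0 : 0 ≤ X := norm_nonneg _
  have hbρ : (0:ℝ) < b + ρ := by linarith
  nlinarith [hs]

lemma branchA {r ε : ℝ} (hr : 2 ≤ r) (hε : 0 < ε) (hεhalf : ε ≤ 1/2)
    (hεr : r * ε < (1/3 : ℝ) ^ r)
    (u v w : lp (fun _ : ℕ => ℝ) (ENNReal.ofReal r))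
    {r1 r2 r3 ρ : ℝ}
    (h1 : ‖u‖ = r1 + ρ) (h2 : ‖v‖ = r2 + ρ) (h3 : ‖w‖ = r3 + ρ)
    (h12 : ‖u - v‖ = r1 + r2) (h13 : ‖u - w‖ = r1 + r3) (h23 : ‖v - w‖ = r2 + r3)
    (hρ : 0 < ρ) (hρ3 : ρ ≤ ε * r3) (h32 : r3 ≤ r2) (h21 : r2 ≤ r1) : False := by
  haveI : Fact (1 ≤ ENNReal.ofReal r) := fact_one_le (by linarith)
  have hr3 : 0 < r3 := by nlinarith
  have hr2 : 0 < r2 := lt_of_lt_of_le hr3 h32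
  have hr1 : 0 < r1 := lt_of_lt_of_le hr2 h21
  have hρ2 : ρ ≤ ε * r2 := le_trans hρ3 (by nlinarith)
  have hu0 : u ≠ 0 := by
    intro h; rw [h, norm_zero] at h1; nlinarith
  have hv0 : v ≠ 0 := by
    intro h; rw [h, norm_zero] at h2; nlinarith
  have hw0 : w ≠ 0 := by
    intro h; rw [h, norm_zero] at h3; nlinarith
  have nuh : ‖(‖u‖⁻¹ • u)‖ = 1 := norm_smul_inv_norm hu0
  have nvh : ‖(‖v‖⁻¹ • v)‖ = 1 := norm_smul_inv_norm hv0
  have nwh : ‖(‖w‖⁻¹ • w)‖ = 1 := norm_smul_inv_norm hw0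
  have pair12 := pair_half u v hv0 h1 h2 h12 hr2 hρ hρ2 h21 hε
  have pair13 := pair_half u w hw0 h1 h3 h13 hr3 hρ hρ3 (h32.trans h21) hε
  have pair23 := pair_half v w hw0 h2 h3 h23 hr3 hρ hρ3 h32 hε
  have s12 := small_sum hr hε.le hεr _ _ (le_of_eq nuh) (le_of_eq nvh) pair12
  have s13 := small_sum hr hε.le hεr _ _ (le_of_eq nuh) (le_of_eq nwh) pair13
  have s23 := small_sum hr hε.le hεr _ _ (le_of_eq nvh) (le_of_eq nwh) pair23
  have hid : ((‖u‖⁻¹ • u) + (‖v‖⁻¹ • v)) + (((‖v‖⁻¹ • v) + (‖w‖⁻¹ • w))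
      - ((‖u‖⁻¹ • u) + (‖w‖⁻¹ • w))) = (‖v‖⁻¹ • v) + (‖v‖⁻¹ • v) := by abel
  have h2v : ‖(‖v‖⁻¹ • v) + (‖v‖⁻¹ • v)‖ = 2 := by
    rw [← two_smul ℝ (‖v‖⁻¹ • v), norm_smul, nvh, Real.norm_eq_abs]; norm_num
  have hfin : (2:ℝ) ≤ ‖(‖u‖⁻¹ • u) + (‖v‖⁻¹ • v)‖
      + (‖(‖v‖⁻¹ • v) + (‖w‖⁻¹ • w)‖ + ‖(‖u‖⁻¹ • u) + (‖w‖⁻¹ • w)‖) := by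
    calc (2:ℝ) = ‖(‖v‖⁻¹ • v) + (‖v‖⁻¹ • v)‖ := h2v.symm
    _ = ‖((‖u‖⁻¹ • u) + (‖v‖⁻¹ • v)) + (((‖v‖⁻¹ • v) + (‖w‖⁻¹ • w))
          - ((‖u‖⁻¹ • u) + (‖w‖⁻¹ • w)))‖ := by rw [hid]
    _ ≤ ‖(‖u‖⁻¹ • u) + (‖v‖⁻¹ • v)‖ + ‖((‖v‖⁻¹ • v) + (‖w‖⁻¹ • w))
          - ((‖u‖⁻¹ • u) + (‖w‖⁻¹ • w))‖ := norm_add_le _ _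
    _ ≤ ‖(‖u‖⁻¹ • u) + (‖v‖⁻¹ • v)‖ + (‖(‖v‖⁻¹ • v) + (‖w‖⁻¹ • w)‖
          + ‖(‖u‖⁻¹ • u) + (‖w‖⁻¹ • w)‖) := by
        linarith [norm_sub_le ((‖v‖⁻¹ • v) + (‖w‖⁻¹ • w)) ((‖u‖⁻¹ • u) + (‖w‖⁻¹ • w))]
  linarith

end Stmt19Aux
namespace Stmt19Aux
open Real

noncomputable def tpair {qe pe : ℝ≥0∞} (g : lp (fun _ : ℕ => ℝ) qe)
    (x : lp (fun _ : ℕ => ℝ) pe) : ℝ := ∑' i, g i * x i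

section tpair
variable {qe pe : ℝ≥0∞}

lemma tpair_summable (hconj : qe.toReal.HolderConjugate pe.toReal) (g : lp (fun _ : ℕ => ℝ) qe) (x : lp (fun _ : ℕ => ℝ) pe) :
    Summable (fun i => g i * x i) := by
  have h := lp.summable_mul hconj g x
  refine Summable.of_abs ?_
  simpa [Real.norm_eq_abs, abs_mul] using h

lemma tpair_le (hconj : qe.toReal.HolderConjugate pe.toReal) (g : lp (fun _ : ℕ => ℝ) qe) (x : lp (fun _ : ℕ => ℝ) pe) :
    tpair g x ≤ ‖g‖ * ‖x‖ := by
  have h := lp.summable_mul hconj g x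
  have h2 : ∀ i, g i * x i ≤ |g i| * |x i| := by
    intro i; rw [← abs_mul]; exact le_abs_self _
  calc tpair g x ≤ ∑' i, |g i| * |x i| := by
        refine Summable.tsum_le_tsum h2 (tpair_summable hconj g x) ?_
        simpa [Real.norm_eq_abs] using h
  _ ≤ ‖g‖ * ‖x‖ := by
        have := lp.tsum_mul_le_mul_norm' hconj g x
        simpa [Real.norm_eq_abs] using this

lemma tpair_sub_right (hconj : qe.toReal.HolderConjugate pe.toReal) (g : lp (fun _ : ℕ => ℝ) qe) (x y : lp (fun _ : ℕ => ℝ) pe) :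
    tpair g (x - y) = tpair g x - tpair g y := by
  unfold tpair
  rw [← Summable.tsum_sub (tpair_summable hconj g x) (tpair_summable hconj g y)]
  apply tsum_congr
  intro i
  have e : (x - y) i = x i - y i := by rw [lp.coeFn_sub]; rfl
  rw [e]; ring

lemma tpair_neg_right (hconj : qe.toReal.HolderConjugate pe.toReal) (g : lp (fun _ : ℕ => ℝ) qe) (x : lp (fun _ : ℕ => ℝ) pe) :
    tpair g (-x) = - tpair g x := by
  unfold tpair
  rw [← tsum_neg]
  apply tsum_congr
  intro i
  have e : (-x) i = -(x i) := by rw [lp.coeFn_neg]; rfl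
  rw [e]; ring

lemma tpair_add_left (hconj : qe.toReal.HolderConjugate pe.toReal) (g h : lp (fun _ : ℕ => ℝ) qe) (x : lp (fun _ : ℕ => ℝ) pe) :
    tpair (g + h) x = tpair g x + tpair h x := by
  unfold tpair
  rw [← Summable.tsum_add (tpair_summable hconj g x) (tpair_summable hconj h x)]
  apply tsum_congr
  intro i
  have e : (g + h) i = g i + h i := by rw [lp.coeFn_add]; rfl
  rw [e]; ring

lemma tpair_sub_left (hconj : qe.toReal.HolderConjugate pe.toReal) (g h : lp (fun _ : ℕ => ℝ) qe) (x : lp (fun _ : ℕ => ℝ) pe) :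
    tpair (g - h) x = tpair g x - tpair h x := by
  unfold tpair
  rw [← Summable.tsum_sub (tpair_summable hconj g x) (tpair_summable hconj h x)]
  apply tsum_congr
  intro i
  have e : (g - h) i = g i - h i := by rw [lp.coeFn_sub]; rfl
  rw [e]; ring

lemma tpair_smul_left (c : ℝ) (g : lp (fun _ : ℕ => ℝ) qe) (x : lp (fun _ : ℕ => ℝ) pe) :
    tpair (c • g) x = c * tpair g x := by
  unfold tpair
  rw [← tsum_mul_left]
  apply tsum_congr
  intro i
  have e : (c • g) i = c * g i := by rw [lp.coeFn_smul]; rfl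
  rw [e]; ring

end tpair

end Stmt19Aux
namespace Stmt19Aux
open Real

lemma Jabs {p : ℝ} (hp1 : 1 < p) (t : ℝ) : ‖|t| ^ (p-2) * t‖ = |t| ^ (p-1) := by
  rcases eq_or_ne t 0 with h | h
  · subst h
    simp [Real.zero_rpow (show p - 1 ≠ 0 by intro hc; nlinarith)]
  · have ht : 0 < |t| := abs_pos.2 h
    rw [Real.norm_eq_abs, abs_mul, abs_of_pos (Real.rpow_pos_of_pos ht _),
      ← Real.rpow_add_one (ne_of_gt ht)]
    congr 1; ring

lemma Jmul {p : ℝ} (hp1 : 1 < p) (t : ℝ) : (|t| ^ (p-2) * t) * t = |t| ^ p := by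
  rcases eq_or_ne t 0 with h | h
  · subst h; simp [Real.zero_rpow (show p ≠ 0 by intro hc; nlinarith)]
  · have ht : 0 < |t| := abs_pos.2 h
    have e : t * t = |t| ^ (2:ℝ) := by
      rw [show (2:ℝ) = ((2:ℕ):ℝ) by norm_num, Real.rpow_natCast, pow_two, abs_mul_abs_self]
    calc (|t|^(p-2) * t) * t = |t|^(p-2) * (t*t) := by ring
    _ = |t|^(p-2) * |t|^(2:ℝ) := by rw [e]
    _ = |t|^((p-2)+2) := (Real.rpow_add ht _ _).symm
    _ = |t|^p := by congr 1; ring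

lemma memJ {p : ℝ} (hp1 : 1 < p) (z : lp (fun _ : ℕ => ℝ) (ENNReal.ofReal p)) :
    Memℓp (fun i => |z i| ^ (p-2) * z i) (ENNReal.ofReal (p/(p-1))) := by
  have hp0 : (0:ℝ) < p := by linarith
  have hq0 : (0:ℝ) < p/(p-1) := div_pos hp0 (by linarith)
  have htq : (ENNReal.ofReal (p/(p-1))).toReal = p/(p-1) := ENNReal.toReal_ofReal hq0.le
  have htp : (ENNReal.ofReal p).toReal = p := ENNReal.toReal_ofReal hp0.le
  have hne : p - 1 ≠ 0 := by intro hc; nlinarith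
  apply memℓp_gen
  have hsum : Summable fun i => ‖z i‖ ^ p := by
    have := (lp.memℓp z).summable (by rw [htp]; exact hp0)
    rwa [htp] at this
  refine hsum.congr (fun i => ?_)
  rw [htq, Jabs hp1, Real.norm_eq_abs, ← Real.rpow_mul (abs_nonneg _)]
  congr 1
  field_simp

lemma normJ {p : ℝ} (hp1 : 1 < p) (z : lp (fun _ : ℕ => ℝ) (ENNReal.ofReal p)) :
    ‖(⟨fun i => |z i| ^ (p-2) * z i, memJ hp1 z⟩ :
      lp (fun _ : ℕ => ℝ) (ENNReal.ofReal (p/(p-1))))‖ = ‖z‖ ^ (p-1) := by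
  have hp0 : (0:ℝ) < p := by linarith
  have hq0 : (0:ℝ) < p/(p-1) := div_pos hp0 (by linarith)
  have htq : (ENNReal.ofReal (p/(p-1))).toReal = p/(p-1) := ENNReal.toReal_ofReal hq0.le
  have htp : (ENNReal.ofReal p).toReal = p := ENNReal.toReal_ofReal hp0.le
  have hne : p - 1 ≠ 0 := by intro hc; nlinarith
  haveI : Fact (1 ≤ ENNReal.ofReal p) := fact_one_le hp1.le
  haveI : Fact (1 ≤ ENNReal.ofReal (p/(p-1))) := fact_one_le
    (by rw [le_div_iff₀ (by linarith : (0:ℝ) < p - 1)]; linarith)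
  set J : lp (fun _ : ℕ => ℝ) (ENNReal.ofReal (p/(p-1))) :=
    ⟨fun i => |z i| ^ (p-2) * z i, memJ hp1 z⟩ with hJ
  have hq0' : 0 < (ENNReal.ofReal (p/(p-1))).toReal := by rw [htq]; exact hq0
  have hp0' : 0 < (ENNReal.ofReal p).toReal := by rw [htp]; exact hp0
  have hJq : ‖J‖ ^ (p/(p-1)) = ∑' i, ‖z i‖ ^ p := by
    have h := lp.norm_rpow_eq_tsum hq0' J
    rw [htq] at h
    rw [h]
    apply tsum_congr
    intro i
    have hco : (J : ∀ _ : ℕ, ℝ) i = |z i| ^ (p-2) * z i := rfl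
    rw [hco, Jabs hp1, Real.norm_eq_abs, ← Real.rpow_mul (abs_nonneg _)]
    congr 1
    field_simp
  have hzp : ‖z‖ ^ p = ∑' i, ‖z i‖ ^ p := by
    have h := lp.norm_rpow_eq_tsum hp0' z
    rwa [htp] at h
  have key : ‖J‖ ^ (p/(p-1)) = (‖z‖ ^ (p-1)) ^ (p/(p-1)) := by
    rw [hJq, ← hzp, ← Real.rpow_mul (norm_nonneg z)]
    congr 1
    field_simp
  have h1 : (‖J‖ ^ (p/(p-1))) ^ (p/(p-1))⁻¹ = ‖J‖ := by
    rw [← Real.rpow_mul (norm_nonneg J), mul_inv_cancel₀ (ne_of_gt hq0), Real.rpow_one]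
  have h2 : ((‖z‖ ^ (p-1)) ^ (p/(p-1))) ^ (p/(p-1))⁻¹ = ‖z‖ ^ (p-1) := by
    rw [← Real.rpow_mul (Real.rpow_nonneg (norm_nonneg z) _),
      mul_inv_cancel₀ (ne_of_gt hq0), Real.rpow_one]
  rw [← h1, key, h2]

end Stmt19Aux

namespace Stmt19Aux
open Real

lemma exists_norming {p : ℝ} (hp1 : 1 < p)
    (z : lp (fun _ : ℕ => ℝ) (ENNReal.ofReal p)) (hz : z ≠ 0) :
    ∃ g : lp (fun _ : ℕ => ℝ) (ENNReal.ofReal (p/(p-1))), ‖g‖ = 1 ∧ tpair g z = ‖z‖ := by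
  have hp0 : (0:ℝ) < p := by linarith only [hp1]
  have hpm : (0:ℝ) < p - 1 := by linarith only [hp1]
  have hq0 : (0:ℝ) < p/(p-1) := div_pos hp0 hpm
  have htp : (ENNReal.ofReal p).toReal = p := ENNReal.toReal_ofReal hp0.le
  haveI : Fact (1 ≤ ENNReal.ofReal p) := fact_one_le hp1.le
  haveI : Fact (1 ≤ ENNReal.ofReal (p/(p-1))) := fact_one_le
    (by rw [le_div_iff₀ hpm]; linarith only [hp1])
  have hz0 : (0:ℝ) < ‖z‖ := norm_pos_iff.2 hz
  have hzp1 : (0:ℝ) < ‖z‖ ^ (p-1) := Real.rpow_pos_of_pos hz0 _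
  set J : lp (fun _ : ℕ => ℝ) (ENNReal.ofReal (p/(p-1))) :=
    ⟨fun i => |z i| ^ (p-2) * z i, memJ hp1 z⟩ with hJdef
  have hnJ : ‖J‖ = ‖z‖ ^ (p-1) := normJ hp1 z
  set c : ℝ := (‖z‖ ^ (p-1))⁻¹ with hcdef
  have hc0 : 0 < c := inv_pos.2 hzp1
  refine ⟨c • J, ?_, ?_⟩
  · rw [lp.norm_const_smul (by simp [ENNReal.ofReal_pos, hq0] : (ENNReal.ofReal (p/(p-1))) ≠ 0),
      hnJ, Real.norm_eq_abs, abs_of_pos hc0, hcdef, inv_mul_cancel₀ (ne_of_gt hzp1)]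
  · have hτJ : tpair J z = ‖z‖ ^ p := by
      unfold tpair
      have hzp : ‖z‖ ^ p = ∑' i, ‖z i‖ ^ p := by
        have h := lp.norm_rpow_eq_tsum (by rw [htp]; exact hp0) z
        rwa [htp] at h
      rw [hzp]
      apply tsum_congr
      intro i
      have hco : (J : ∀ _ : ℕ, ℝ) i = |z i| ^ (p-2) * z i := rfl
      rw [hco, Real.norm_eq_abs, Jmul hp1]
    rw [tpair_smul_left, hτJ, hcdef]
    have hsplit : ‖z‖ ^ p = ‖z‖ ^ (p-1) * ‖z‖ := by
      rw [← Real.rpow_add_one (ne_of_gt hz0)]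
      congr 1; ring
    rw [hsplit]
    field_simp

lemma branchB {p ε : ℝ} (hp1 : 1 < p) (hp2 : p < 2) (hε : 0 < ε)
    (hεr : (p/(p-1)) * (2*ε) < (1/3 : ℝ) ^ (p/(p-1)))
    (u v w : lp (fun _ : ℕ => ℝ) (ENNReal.ofReal p))
    {r1 r2 r3 ρ : ℝ}
    (h1 : ‖u‖ = r1 + ρ) (h2 : ‖v‖ = r2 + ρ) (h3 : ‖w‖ = r3 + ρ)
    (h12 : ‖u - v‖ = r1 + r2) (h13 : ‖u - w‖ = r1 + r3) (h23 : ‖v - w‖ = r2 + r3)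
    (hρ : 0 < ρ) (hρ3 : ρ ≤ ε * r3) (h32 : r3 ≤ r2) (h21 : r2 ≤ r1) : False := by
  have hp0 : (0:ℝ) < p := by linarith only [hp1]
  have hpm : (0:ℝ) < p - 1 := by linarith only [hp1]
  have hq0 : (0:ℝ) < p/(p-1) := div_pos hp0 hpm
  have hq2 : 2 ≤ p/(p-1) := by rw [le_div_iff₀ hpm]; linarith only [hp2]
  have htq : (ENNReal.ofReal (p/(p-1))).toReal = p/(p-1) := ENNReal.toReal_ofReal hq0.le
  have htp : (ENNReal.ofReal p).toReal = p := ENNReal.toReal_ofReal hp0.le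
  haveI : Fact (1 ≤ ENNReal.ofReal p) := fact_one_le hp1.le
  haveI : Fact (1 ≤ ENNReal.ofReal (p/(p-1))) := fact_one_le (by linarith only [hq2])
  have hconj : (ENNReal.ofReal (p/(p-1))).toReal.HolderConjugate (ENNReal.ofReal p).toReal := by
    rw [htq, htp, Real.holderConjugate_iff]
    constructor
    · linarith only [hq2]
    · field_simp; ring
  have hεr3 : 0 < ε * r3 := lt_of_lt_of_le hρ hρ3
  have hr3 : 0 < r3 := by
    have hd : 0 < (ε * r3)/ε := div_pos hεr3 hε
    rwa [mul_div_cancel_left₀ _ (ne_of_gt hε)] at hd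
  have hr2 : 0 < r2 := lt_of_lt_of_le hr3 h32
  have hr1 : 0 < r1 := lt_of_lt_of_le hr2 h21
  have hρ2 : ρ ≤ ε * r2 := le_trans hρ3 (mul_le_mul_of_nonneg_left h32 hε.le)
  have hρ1 : ρ ≤ ε * r1 := le_trans hρ3 (mul_le_mul_of_nonneg_left (h32.trans h21) hε.le)
  obtain ⟨g, hg1, hgz⟩ := exists_norming hp1 (u - v)
    (by intro hcon; rw [hcon, norm_zero] at h12; linarith only [h12, hr1, hr2])
  obtain ⟨h, hh1, hhz⟩ := exists_norming hp1 (u - w)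
    (by intro hcon; rw [hcon, norm_zero] at h13; linarith only [h13, hr1, hr3])
  obtain ⟨k, hk1, hkz⟩ := exists_norming hp1 (v - w)
    (by intro hcon; rw [hcon, norm_zero] at h23; linarith only [h23, hr2, hr3])
  rw [h12] at hgz
  rw [h13] at hhz
  rw [h23] at hkz
  -- g bounds
  have hgsub : tpair g (u - v) = tpair g u - tpair g v := tpair_sub_right hconj g u v
  have hgu_up : tpair g u ≤ r1 + ρ := by
    have hb := tpair_le hconj g u; rwa [hg1, one_mul, h1] at hb
  have hgv_up : tpair g v ≤ r2 + ρ := by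
    have hb := tpair_le hconj g v; rwa [hg1, one_mul, h2] at hb
  have hgv_lowneg : -(r2 + ρ) ≤ tpair g v := by
    have hb := tpair_le hconj g (-v)
    rw [tpair_neg_right hconj, hg1, one_mul, norm_neg, h2] at hb
    linarith only [hb]
  have hgu_low : r1 - ρ ≤ tpair g u := by
    rw [hgz] at hgsub; linarith only [hgsub, hgv_lowneg]
  have hgv_neg : r2 - ρ ≤ - tpair g v := by
    rw [hgz] at hgsub; linarith only [hgsub, hgu_up]
  -- h bounds
  have hhsub : tpair h (u - w) = tpair h u - tpair h w := tpair_sub_right hconj h u w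
  have hhu_up : tpair h u ≤ r1 + ρ := by
    have hb := tpair_le hconj h u; rwa [hh1, one_mul, h1] at hb
  have hhw_up : tpair h w ≤ r3 + ρ := by
    have hb := tpair_le hconj h w; rwa [hh1, one_mul, h3] at hb
  have hhw_lowneg : -(r3 + ρ) ≤ tpair h w := by
    have hb := tpair_le hconj h (-w)
    rw [tpair_neg_right hconj, hh1, one_mul, norm_neg, h3] at hb
    linarith only [hb]
  have hhu_low : r1 - ρ ≤ tpair h u := by
    rw [hhz] at hhsub; linarith only [hhsub, hhw_lowneg]
  have hhw_neg : r3 - ρ ≤ - tpair h w := by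
    rw [hhz] at hhsub; linarith only [hhsub, hhu_up]
  -- k bounds
  have hksub : tpair k (v - w) = tpair k v - tpair k w := tpair_sub_right hconj k v w
  have hkv_up : tpair k v ≤ r2 + ρ := by
    have hb := tpair_le hconj k v; rwa [hk1, one_mul, h2] at hb
  have hkw_up : tpair k w ≤ r3 + ρ := by
    have hb := tpair_le hconj k w; rwa [hk1, one_mul, h3] at hb
  have hkw_lowneg : -(r3 + ρ) ≤ tpair k w := by
    have hb := tpair_le hconj k (-w)
    rw [tpair_neg_right hconj, hk1, one_mul, norm_neg, h3] at hb
    linarith only [hb]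
  have hkv_low : r2 - ρ ≤ tpair k v := by
    rw [hkz] at hksub; linarith only [hksub, hkw_lowneg]
  have hkw_neg : r3 - ρ ≤ - tpair k w := by
    rw [hkz] at hksub; linarith only [hksub, hkv_up]
  -- pair (g,h) : aligned on u
  have hgh_big : 2 - 2*(2*ε) ≤ ‖g + h‖ := by
    have hplus : tpair (g + h) u = tpair g u + tpair h u := tpair_add_left hconj g h u
    have hle : tpair (g + h) u ≤ ‖g + h‖ * (r1 + ρ) := by
      have hb := tpair_le hconj (g + h) u; rwa [h1] at hb
    have e1 : (2 - 2*(2*ε)) * (r1 + ρ) ≤ 2*(r1 - ρ) := by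
      nlinarith only [hρ1, mul_pos hε hρ, hε, hρ]
    have e2 : (2 - 2*(2*ε)) * (r1 + ρ) ≤ ‖g + h‖ * (r1 + ρ) := by
      linarith only [e1, hplus, hle, hgu_low, hhu_low]
    exact le_of_mul_le_mul_right e2 (by linarith only [hr1, hρ])
  have s_gh : ‖g - h‖ < 2/3 := by
    have hs := small_sum hq2 (by linarith only [hε] : (0:ℝ) ≤ 2*ε) hεr g (-h) (le_of_eq hg1)
      (by rw [norm_neg]; exact le_of_eq hh1) (by rw [sub_neg_eq_add]; exact hgh_big)
    rwa [← sub_eq_add_neg] at hs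
  -- pair (g,k) : opposed via v
  have hgk_big : 2 - 2*(2*ε) ≤ ‖g - k‖ := by
    have hplus : tpair (g - k) (-v) = -tpair g v + tpair k v := by
      rw [tpair_sub_left hconj g k (-v), tpair_neg_right hconj g v, tpair_neg_right hconj k v]
      ring
    have hle : tpair (g - k) (-v) ≤ ‖g - k‖ * (r2 + ρ) := by
      have hb := tpair_le hconj (g - k) (-v); rwa [norm_neg, h2] at hb
    have e1 : (2 - 2*(2*ε)) * (r2 + ρ) ≤ 2*(r2 - ρ) := by
      nlinarith only [hρ2, mul_pos hε hρ, hε, hρ]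
    have e2 : (2 - 2*(2*ε)) * (r2 + ρ) ≤ ‖g - k‖ * (r2 + ρ) := by
      linarith only [e1, hplus, hle, hgv_neg, hkv_low]
    exact le_of_mul_le_mul_right e2 (by linarith only [hr2, hρ])
  have s_gk : ‖g + k‖ < 2/3 :=
    small_sum hq2 (by linarith only [hε] : (0:ℝ) ≤ 2*ε) hεr g k (le_of_eq hg1) (le_of_eq hk1) hgk_big
  -- pair (h,k) : aligned on -w
  have hhk_big : 2 - 2*(2*ε) ≤ ‖h + k‖ := by
    have hplus : tpair (h + k) (-w) = -tpair h w + -tpair k w := by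
      rw [tpair_add_left hconj h k (-w), tpair_neg_right hconj h w, tpair_neg_right hconj k w]
    have hle : tpair (h + k) (-w) ≤ ‖h + k‖ * (r3 + ρ) := by
      have hb := tpair_le hconj (h + k) (-w); rwa [norm_neg, h3] at hb
    have e1 : (2 - 2*(2*ε)) * (r3 + ρ) ≤ 2*(r3 - ρ) := by
      nlinarith only [hρ3, mul_pos hε hρ, hε, hρ]
    have e2 : (2 - 2*(2*ε)) * (r3 + ρ) ≤ ‖h + k‖ * (r3 + ρ) := by
      linarith only [e1, hplus, hle, hhw_neg, hkw_neg]
    exact le_of_mul_le_mul_right e2 (by linarith only [hr3, hρ])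
  have s_hk : ‖h - k‖ < 2/3 := by
    have hs := small_sum hq2 (by linarith only [hε] : (0:ℝ) ≤ 2*ε) hεr h (-k) (le_of_eq hh1)
      (by rw [norm_neg]; exact le_of_eq hk1) (by rw [sub_neg_eq_add]; exact hhk_big)
    rwa [← sub_eq_add_neg] at hs
  -- final contradiction
  have hid : (g + k) - (g - h) - (h - k) = k + k := by abel
  have h2k : ‖k + k‖ = 2 := by
    rw [← two_smul ℝ k, norm_smul, hk1, Real.norm_eq_abs]; norm_num
  have hfin : (2:ℝ) ≤ ‖g + k‖ + ‖g - h‖ + ‖h - k‖ := by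
    calc (2:ℝ) = ‖k + k‖ := h2k.symm
    _ = ‖(g + k) - (g - h) - (h - k)‖ := by rw [hid]
    _ ≤ ‖(g + k) - (g - h)‖ + ‖h - k‖ := norm_sub_le _ _
    _ ≤ ‖g + k‖ + ‖g - h‖ + ‖h - k‖ := by
        linarith only [norm_sub_le (g + k) (g - h)]
  linarith only [hfin, s_gh, s_gk, s_hk]

end Stmt19Aux

/-- For every `1 < p < ∞` and every `n ≥ 4` there exists an `n`-point metric space
(a metric `d` on `Fin n`) such that no 4-point subspace of it embeds isometrically
into `ℓ_p`. -/
theorem stmt19 (p : ℝ) (hp : 1 < p) (n : ℕ) (hn : 4 ≤ n) :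
    ∃ d : Fin n → Fin n → ℝ, IsMetricDist d ∧
      ∀ S : Finset (Fin n), S.card = 4 →
        ¬ ∃ f : Fin n → lp (fun _ : ℕ => ℝ) (ENNReal.ofReal p),
            ∀ x ∈ S, ∀ y ∈ S, ‖f x - f y‖ = d x y := by
  classical
  set R : ℝ := if 2 ≤ p then p else p/(p-1) with hR
  have hR2 : 2 ≤ R := by
    rw [hR]; split_ifs with h
    · exact h
    · push_neg at h
      rw [le_div_iff₀ (by linarith : (0:ℝ) < p - 1)]; linarith
  have hR0 : (0:ℝ) < R := by linarith
  have hthirdpos : (0:ℝ) < (1/3:ℝ) ^ R := Real.rpow_pos_of_pos (by norm_num) _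
  set ε : ℝ := min (1/2) ((1/3 : ℝ) ^ R / (8 * R)) with hεdef
  have hεpos : 0 < ε := lt_min (by norm_num) (div_pos hthirdpos (by linarith))
  have hεhalf : ε ≤ 1/2 := min_le_left _ _
  have hεsmall : ε ≤ (1/3:ℝ)^R/(8*R) := min_le_right _ _
  have hcondB : R * (2*ε) < (1/3:ℝ)^R := by
    have h1 : R * (2*ε) ≤ R * (2*((1/3:ℝ)^R/(8*R))) := by nlinarith
    have h2 : R * (2*((1/3:ℝ)^R/(8*R))) = (1/3:ℝ)^R/4 := by
      field_simp; ring
    rw [h2] at h1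
    linarith
  have hcondA : R * ε < (1/3:ℝ)^R := by nlinarith
  have hεle1 : ε ≤ 1 := le_trans hεhalf (by norm_num)
  have hmono : ∀ i j : ℕ, i ≤ j → ε^j ≤ ε^i :=
    fun i j hij => pow_le_pow_of_le_one hεpos.le hεle1 hij
  have hpowpos : ∀ i : ℕ, (0:ℝ) < ε ^ i := fun i => pow_pos hεpos i
  refine ⟨fun i j => if i = j then 0 else ε^((i:ℕ)+1) + ε^((j:ℕ)+1), ⟨?_, ?_, ?_⟩, ?_⟩
  · intro x y
    dsimp only
    by_cases hxy : x = y
    · simp [hxy]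
    · rw [if_neg hxy]
      constructor
      · intro h0
        exfalso
        have := hpowpos ((x:ℕ)+1)
        have := hpowpos ((y:ℕ)+1)
        linarith
      · intro h; exact absurd h hxy
  · intro x y
    dsimp only
    by_cases hxy : x = y
    · subst hxy; simp
    · rw [if_neg hxy, if_neg (fun hc => hxy hc.symm)]; ring
  · intro x y z
    dsimp only
    have hnn : ∀ a b : Fin n, 0 ≤ (if a = b then (0:ℝ) else ε^((a:ℕ)+1) + ε^((b:ℕ)+1)) := by
      intro a b; split_ifs
      · exact le_refl 0
      · positivity
    by_cases hxz : x = z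
    · rw [if_pos hxz]
      exact add_nonneg (hnn x y) (hnn y z)
    · rw [if_neg hxz]
      by_cases hxy : x = y
      · subst hxy
        rw [if_pos rfl, if_neg hxz]
        linarith
      · by_cases hyz : y = z
        · subst hyz
          rw [if_neg hxy, if_pos rfl]
          linarith
        · rw [if_neg hxy, if_neg hyz]
          have := hpowpos ((y:ℕ)+1)
          linarith
  · intro S hS
    rintro ⟨f, hf⟩
    set l := S.sort (· ≤ ·) with hl
    have hlen : l.length = 4 := by rw [hl, Finset.length_sort, hS]
    have hsort : List.Pairwise (· < ·) l := S.sortedLT_sort.pairwise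
    have h0 : 0 < l.length := by omega
    have h1 : 1 < l.length := by omega
    have h2' : 2 < l.length := by omega
    have h3 : 3 < l.length := by omega
    set a := l.get ⟨0, h0⟩ with ha
    set b := l.get ⟨1, h1⟩ with hb
    set c := l.get ⟨2, h2'⟩ with hc
    set e := l.get ⟨3, h3⟩ with he
    have hab : a < b := hsort.rel_get_of_lt (Fin.mk_lt_mk.mpr (by norm_num))
    have hbc : b < c := hsort.rel_get_of_lt (Fin.mk_lt_mk.mpr (by norm_num))
    have hce : c < e := hsort.rel_get_of_lt (Fin.mk_lt_mk.mpr (by norm_num))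
    have hac : a < c := lt_trans hab hbc
    have hae : a < e := lt_trans hac hce
    have hbe : b < e := lt_trans hbc hce
    have haS : a ∈ S := by
      rw [← Finset.mem_sort (α := Fin n) (· ≤ ·), ← hl]; exact l.get_mem _
    have hbS : b ∈ S := by
      rw [← Finset.mem_sort (α := Fin n) (· ≤ ·), ← hl]; exact l.get_mem _
    have hcS : c ∈ S := by
      rw [← Finset.mem_sort (α := Fin n) (· ≤ ·), ← hl]; exact l.get_mem _
    have heS : e ∈ S := by
      rw [← Finset.mem_sort (α := Fin n) (· ≤ ·), ← hl]; exact l.get_mem _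
    have hnab : (a:ℕ) < (b:ℕ) := hab
    have hnbc : (b:ℕ) < (c:ℕ) := hbc
    have hnce : (c:ℕ) < (e:ℕ) := hce
    -- distances
    have dab : ‖f a - f b‖ = ε^((a:ℕ)+1) + ε^((b:ℕ)+1) := by
      have hx := hf a haS b hbS
      dsimp only at hx
      rwa [if_neg (ne_of_lt hab)] at hx
    have dac : ‖f a - f c‖ = ε^((a:ℕ)+1) + ε^((c:ℕ)+1) := by
      have hx := hf a haS c hcS
      dsimp only at hx
      rwa [if_neg (ne_of_lt hac)] at hx
    have dae : ‖f a - f e‖ = ε^((a:ℕ)+1) + ε^((e:ℕ)+1) := by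
      have hx := hf a haS e heS
      dsimp only at hx
      rwa [if_neg (ne_of_lt hae)] at hx
    have dbc : ‖f b - f c‖ = ε^((b:ℕ)+1) + ε^((c:ℕ)+1) := by
      have hx := hf b hbS c hcS
      dsimp only at hx
      rwa [if_neg (ne_of_lt hbc)] at hx
    have dbe : ‖f b - f e‖ = ε^((b:ℕ)+1) + ε^((e:ℕ)+1) := by
      have hx := hf b hbS e heS
      dsimp only at hx
      rwa [if_neg (ne_of_lt hbe)] at hx
    have dce : ‖f c - f e‖ = ε^((c:ℕ)+1) + ε^((e:ℕ)+1) := by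
      have hx := hf c hcS e heS
      dsimp only at hx
      rwa [if_neg (ne_of_lt hce)] at hx
    -- vectors
    have huv : f a - f e - (f b - f e) = f a - f b := by abel
    have huw : f a - f e - (f c - f e) = f a - f c := by abel
    have hvw : f b - f e - (f c - f e) = f b - f c := by abel
    have h12 : ‖f a - f e - (f b - f e)‖ = ε^((a:ℕ)+1) + ε^((b:ℕ)+1) := by rw [huv, dab]
    have h13 : ‖f a - f e - (f c - f e)‖ = ε^((a:ℕ)+1) + ε^((c:ℕ)+1) := by rw [huw, dac]
    have h23 : ‖f b - f e - (f c - f e)‖ = ε^((b:ℕ)+1) + ε^((c:ℕ)+1) := by rw [hvw, dbc]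
    have hρ3 : ε^((e:ℕ)+1) ≤ ε * ε^((c:ℕ)+1) := by
      have hh : ε * ε^((c:ℕ)+1) = ε^((c:ℕ)+2) := (pow_succ' ε _).symm
      rw [hh]
      exact hmono _ _ (by omega)
    have h32 : ε^((c:ℕ)+1) ≤ ε^((b:ℕ)+1) := hmono _ _ (by omega)
    have h21 : ε^((b:ℕ)+1) ≤ ε^((a:ℕ)+1) := hmono _ _ (by omega)
    rcases le_or_gt 2 p with hP | hP
    · have hRp : R = p := by rw [hR, if_pos hP]
      exact Stmt19Aux.branchA hP hεpos hεhalf (by rw [← hRp]; exact hcondA)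
        (f a - f e) (f b - f e) (f c - f e) dae dbe dce h12 h13 h23
        (hpowpos _) hρ3 h32 h21
    · have hRq : R = p/(p-1) := by rw [hR, if_neg (not_le.2 hP)]
      exact Stmt19Aux.branchB hp hP hεpos (by rw [← hRq]; exact hcondB)
        (f a - f e) (f b - f e) (f c - f e) dae dbe dce h12 h13 h23
        (hpowpos _) hρ3 h32 h21
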